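/- (Quantitative Lovász Local Lemma.) Let A_1, …, A_n be events in a probability space and let G = ([n], E) be a dependency graph for them, i.e., for every i and every subset J ⊆ [n] \ (N(i) ∪ {i}) of non-neighbors of i, Pr(A_i ∩ ⋂_{j∈J} A_j^c) = Pr(A_i) · Pr(⋂_{j∈J} A_j^c). If there exist real numbers x_1, …, x_n ∈ (0,1) such that Pr(A_i) ≤ x_i · Π_{j∈N(i)} (1 − x_j) for every i ∈ [n], then Pr(⋂_{i∈[n]} A_i^c) ≥ Π_{j∈[n]} (1 − x_j) > 0. -/

import Mathlib

open MeasureTheory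

/-- Quantitative Lovász Local Lemma: if `G` is a dependency graph for
events `A_1, …, A_n` and there are `x_i ∈ (0,1)` with
`Pr(A_i) ≤ x_i · Π_{j ∈ N(i)} (1 − x_j)` for all `i`, then
`Pr(⋂_i A_iᶜ) ≥ Π_j (1 − x_j) > 0`. -/
theorem stmt10 {Ω : Type*} [MeasurableSpace Ω] (P : Measure Ω) [IsProbabilityMeasure P]
    (n : ℕ) (A : Fin n → Set Ω) (hA : ∀ i, MeasurableSet (A i))
    (G : SimpleGraph (Fin n)) [DecidableRel G.Adj]
    (hdep : ∀ i : Fin n, ∀ J : Finset (Fin n),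
      (∀ j ∈ J, j ≠ i ∧ ¬ G.Adj i j) →
      (P (A i ∩ ⋂ j ∈ J, (A j)ᶜ)).toReal
        = (P (A i)).toReal * (P (⋂ j ∈ J, (A j)ᶜ)).toReal)
    (x : Fin n → ℝ) (hx : ∀ i, x i ∈ Set.Ioo (0 : ℝ) 1)
    (hcond : ∀ i, (P (A i)).toReal ≤ x i * ∏ j ∈ G.neighborFinset i, (1 - x j)) :
    (∏ j, (1 - x j)) ≤ (P (⋂ i, (A i)ᶜ)).toReal ∧ 0 < ∏ j, (1 - x j) := by
  classical
  set f : Finset (Fin n) → ℝ := fun S => (P (⋂ j ∈ S, (A j)ᶜ)).toReal with hfdef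
  set g : Fin n → Finset (Fin n) → ℝ :=
    fun i S => (P (A i ∩ ⋂ j ∈ S, (A j)ᶜ)).toReal with hgdef
  have hf0 : ∀ S, 0 ≤ f S := fun S => ENNReal.toReal_nonneg
  have hfempty : f ∅ = 1 := by simp [hfdef]
  have hsplit : ∀ (a : Fin n) (S : Finset (Fin n)),
      f (insert a S) = f S - g a S := by
    intro a S
    have hB : MeasurableSet (A a) := hA a
    have key := measure_inter_add_diff (μ := P) (⋂ j ∈ S, (A j)ᶜ) hB
    have hdiff : (⋂ j ∈ S, (A j)ᶜ) \ A a = ⋂ j ∈ insert a S, (A j)ᶜ := by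
      rw [Finset.set_biInter_insert]
      ext ω; simp [Set.mem_diff, and_comm]
    have hint : (⋂ j ∈ S, (A j)ᶜ) ∩ A a = A a ∩ ⋂ j ∈ S, (A j)ᶜ := Set.inter_comm _ _
    rw [hdiff, hint] at key
    have h1 : P (A a ∩ ⋂ j ∈ S, (A j)ᶜ) ≠ ⊤ := measure_ne_top _ _
    have h2 : P (⋂ j ∈ insert a S, (A j)ᶜ) ≠ ⊤ := measure_ne_top _ _
    simp only [hfdef, hgdef]
    rw [← key, ENNReal.toReal_add h1 h2]
    ring
  have hgmono : ∀ (i : Fin n) (S T : Finset (Fin n)), T ⊆ S → g i S ≤ g i T := by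
    intro i S T hTS
    apply ENNReal.toReal_mono (measure_ne_top _ _)
    apply measure_mono
    apply Set.inter_subset_inter_right
    exact Set.biInter_subset_biInter_left (fun j hj => hTS hj)
  -- main lemma
  have key : ∀ S : Finset (Fin n), ∀ i ∉ S, g i S ≤ x i * f S := by
    intro S
    induction S using Finset.strongInduction with
    | _ S IH =>
      intro i hiS
      -- peel lemma
      have peel : ∀ S1 : Finset (Fin n), ∀ S2 : Finset (Fin n), Disjoint S1 S2 →
          S1 ∪ S2 ⊆ S → (∏ j ∈ S1, (1 - x j)) * f S2 ≤ f (S1 ∪ S2) := by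
        intro S1
        induction S1 using Finset.induction with
        | empty => intro S2 _ _; simp
        | insert _ _ ha =>
          rename_i a S1 IH1
          intro S2 hdisj hsub
          have haS2 : a ∉ S2 := by
            intro h
            exact (Finset.disjoint_left.mp hdisj (Finset.mem_insert_self a S1)) h
          have hdisj' : Disjoint S1 S2 := by
            apply Finset.disjoint_left.mpr
            intro b hb
            exact Finset.disjoint_left.mp hdisj (Finset.mem_insert_of_mem hb)
          have hsub' : S1 ∪ S2 ⊆ S := fun b hb => hsub (by
            rcases Finset.mem_union.mp hb with h | h
            · exact Finset.mem_union_left _ (Finset.mem_insert_of_mem h)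
            · exact Finset.mem_union_right _ h)
          have hU : insert a S1 ∪ S2 = insert a (S1 ∪ S2) := by
            ext b; simp [Finset.mem_insert, Finset.mem_union, or_assoc]
          have haU : a ∉ S1 ∪ S2 := by
            simp [Finset.mem_union, ha, haS2]
          have hssub : S1 ∪ S2 ⊂ S := by
            refine Finset.ssubset_iff_of_subset hsub' |>.mpr ?_
            exact ⟨a, hsub (by rw [hU]; exact Finset.mem_insert_self _ _), haU⟩
          have hkey := IH (S1 ∪ S2) hssub a haU
          have hx1 : 0 ≤ 1 - x a := by have := (hx a).2; linarith
          calc (∏ j ∈ insert a S1, (1 - x j)) * f S2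
              = (1 - x a) * ((∏ j ∈ S1, (1 - x j)) * f S2) := by
                rw [Finset.prod_insert ha]; ring
            _ ≤ (1 - x a) * f (S1 ∪ S2) := by
                apply mul_le_mul_of_nonneg_left (IH1 S2 hdisj' hsub') hx1
            _ ≤ f (insert a S1 ∪ S2) := by
                rw [hU, hsplit a (S1 ∪ S2)]
                nlinarith [hf0 (S1 ∪ S2)]
      -- main argument
      set S1 : Finset (Fin n) := S ∩ G.neighborFinset i with hS1
      set S2 : Finset (Fin n) := S \ G.neighborFinset i with hS2
      have hunion : S1 ∪ S2 = S := by ext b; by_cases hb : b ∈ G.neighborFinset i <;> simp [hS1, hS2, Finset.mem_union, Finset.mem_inter, Finset.mem_sdiff, hb]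
      have hdisj : Disjoint S1 S2 := by
        apply Finset.disjoint_left.mpr
        intro b hb hb2
        exact (Finset.mem_sdiff.mp hb2).2 (Finset.mem_inter.mp hb).2
      have hindep : g i S2 = (P (A i)).toReal * f S2 := by
        apply hdep i S2
        intro j hj
        rcases Finset.mem_sdiff.mp hj with ⟨hjS, hjN⟩
        constructor
        · rintro rfl; exact hiS hjS
        · intro hadj
          exact hjN (by rw [SimpleGraph.mem_neighborFinset]; exact hadj)
      have hprodle : (∏ j ∈ G.neighborFinset i, (1 - x j)) ≤ ∏ j ∈ S1, (1 - x j) := by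
        have hsub : S1 ⊆ G.neighborFinset i := Finset.inter_subset_right
        rw [← Finset.prod_sdiff hsub]
        have h1 : (∏ j ∈ G.neighborFinset i \ S1, (1 - x j)) ≤ 1 := by
          apply Finset.prod_le_one
          · intro j _; have := (hx j).2; linarith
          · intro j _; have := (hx j).1; linarith
        have h2 : 0 ≤ ∏ j ∈ S1, (1 - x j) := by
          apply Finset.prod_nonneg; intro j _; have := (hx j).2; linarith
        nlinarith
      have hxi : 0 < x i := (hx i).1
      calc g i S ≤ g i S2 := hgmono i S S2 (Finset.sdiff_subset)
        _ = (P (A i)).toReal * f S2 := hindep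
        _ ≤ (x i * ∏ j ∈ G.neighborFinset i, (1 - x j)) * f S2 := by
            apply mul_le_mul_of_nonneg_right (hcond i) (hf0 S2)
        _ ≤ x i * ((∏ j ∈ S1, (1 - x j)) * f S2) := by
            have := mul_le_mul_of_nonneg_right hprodle (hf0 S2)
            nlinarith
        _ ≤ x i * f S := by
            have := peel S1 S2 hdisj (le_of_eq hunion)
            rw [hunion] at this
            nlinarith
  -- product bound
  have bound : ∀ S : Finset (Fin n), (∏ j ∈ S, (1 - x j)) ≤ f S := by
    intro S
    induction S using Finset.induction with
    | empty => simp [hfempty]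
    | insert _ _ ha =>
      rename_i a S IHb
      have hk := key S a ha
      have hx1 : 0 ≤ 1 - x a := by have := (hx a).2; linarith
      rw [Finset.prod_insert ha, hsplit a S]
      nlinarith [hf0 S]
  have hpos : 0 < ∏ j, (1 - x j) := by
    apply Finset.prod_pos
    intro j _; have := (hx j).2; linarith
  refine ⟨?_, hpos⟩
  have hiInter : (⋂ i, (A i)ᶜ) = ⋂ j ∈ (Finset.univ : Finset (Fin n)), (A j)ᶜ := by
    simp
  rw [hiInter]
  exact bound Finset.univ
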